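/- Let τ_1,...,τ_n be positive reals with 0 < τ_1 ≤ ... ≤ τ_n, and define t(R) = 2 min_{m∈[n]} [(1/m ∑_{i=1}^m 1/τ_i)^{-1}(1 + R/m)] for positive integer R. Then for every m ∈ [n], all workers i ∈ [m] jointly compute at least R gradients within time t(R) after accounting for one wasted gradient each; formally, ∑_{i=1}^{n} max(⌊t(R)/τ_i⌋ - 1, 0) ≥ R. -/

import Mathlib

theorem stmt_8 (n : ℕ) (hn : 1 ≤ n) (τ : ℕ → ℝ)
    (hτpos : ∀ i ∈ Finset.Icc 1 n, 0 < τ i)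
    (hτmono : ∀ i ∈ Finset.Icc 1 n, ∀ j ∈ Finset.Icc 1 n, i ≤ j → τ i ≤ τ j)
    (R : ℕ) (hR : 1 ≤ R) :
    (R : ℤ) ≤ ∑ i ∈ Finset.Icc 1 n,
      max (⌊(2 * (Finset.Icc 1 n).inf' (Finset.nonempty_Icc.mpr hn)
            (fun m => ((1 / (m : ℝ)) * ∑ i ∈ Finset.Icc 1 m, (τ i)⁻¹)⁻¹ * (1 + (R : ℝ) / m)))
          / τ i⌋ - 1) 0 := by
  set f : ℕ → ℝ := fun m => ((1 / (m : ℝ)) * ∑ i ∈ Finset.Icc 1 m, (τ i)⁻¹)⁻¹ * (1 + (R : ℝ) / m) with hf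
  set T : ℝ := 2 * (Finset.Icc 1 n).inf' (Finset.nonempty_Icc.mpr hn) f with hT
  obtain ⟨m, hm, hmf⟩ := Finset.exists_mem_eq_inf' (Finset.nonempty_Icc.mpr hn) f
  rw [Finset.mem_Icc] at hm
  have hm1 : 1 ≤ m := hm.1
  have hmn : m ≤ n := hm.2
  have hmpos : (0:ℝ) < m := by exact_mod_cast hm1
  have hsub : Finset.Icc 1 m ⊆ Finset.Icc 1 n := Finset.Icc_subset_Icc_right hmn
  have hsum_pos : 0 < ∑ i ∈ Finset.Icc 1 m, (τ i)⁻¹ :=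
    Finset.sum_pos (fun i hi => inv_pos.mpr (hτpos i (hsub hi)))
      (Finset.nonempty_Icc.mpr hm1)
  have hTval : T * ∑ i ∈ Finset.Icc 1 m, (τ i)⁻¹ = 2 * m + 2 * R := by
    have hA : (∑ i ∈ Finset.Icc 1 m, (τ i)⁻¹) ≠ 0 := hsum_pos.ne'
    have hmne : (m:ℝ) ≠ 0 := hmpos.ne'
    rw [hT, hmf, hf]
    simp only [one_div]
    rw [mul_inv, inv_inv]
    have : 2 * ((m:ℝ) * (∑ i ∈ Finset.Icc 1 m, (τ i)⁻¹)⁻¹ * (1 + (R:ℝ) / m)) *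
        (∑ i ∈ Finset.Icc 1 m, (τ i)⁻¹)
        = 2 * (m:ℝ) * (1 + (R:ℝ) / m) *
          ((∑ i ∈ Finset.Icc 1 m, (τ i)⁻¹)⁻¹ * (∑ i ∈ Finset.Icc 1 m, (τ i)⁻¹)) := by ring
    rw [this, inv_mul_cancel₀ hA, mul_one]
    field_simp
  have key : (R:ℝ) ≤ ∑ i ∈ Finset.Icc 1 n, ((max (⌊T / τ i⌋ - 1) 0 : ℤ) : ℝ) := by
    have h1 : ∀ i ∈ Finset.Icc 1 m, T / τ i - 2 ≤ ((max (⌊T / τ i⌋ - 1) 0 : ℤ) : ℝ) := by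
      intro i hi
      have h2 : ((⌊T / τ i⌋ - 1 : ℤ) : ℝ) ≤ ((max (⌊T / τ i⌋ - 1) 0 : ℤ) : ℝ) := by
        exact_mod_cast le_max_left _ _
      rw [Int.cast_sub, Int.cast_one] at h2
      have h3 := Int.sub_one_lt_floor (T / τ i)
      linarith
    have hsumid : ∑ i ∈ Finset.Icc 1 m, (T / τ i - 2)
        = T * (∑ i ∈ Finset.Icc 1 m, (τ i)⁻¹) - 2 * m := by
      rw [Finset.sum_sub_distrib, Finset.mul_sum, Finset.sum_const, Nat.card_Icc]
      simp [div_eq_mul_inv]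
      ring
    calc (R:ℝ) ≤ 2 * R := by
          have h0 : (1:ℝ) ≤ R := by exact_mod_cast hR
          linarith
      _ = T * (∑ i ∈ Finset.Icc 1 m, (τ i)⁻¹) - 2 * m := by rw [hTval]; ring
      _ = ∑ i ∈ Finset.Icc 1 m, (T / τ i - 2) := hsumid.symm
      _ ≤ ∑ i ∈ Finset.Icc 1 m, ((max (⌊T / τ i⌋ - 1) 0 : ℤ) : ℝ) := Finset.sum_le_sum h1
      _ ≤ ∑ i ∈ Finset.Icc 1 n, ((max (⌊T / τ i⌋ - 1) 0 : ℤ) : ℝ) := by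
          refine Finset.sum_le_sum_of_subset_of_nonneg hsub (fun i _ _ => ?_)
          exact_mod_cast le_max_right (⌊T / τ i⌋ - 1) 0
  exact_mod_cast key
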